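/- Let α, Δ > 0, K a positive integer, and E_1, ..., E_K ≥ 0. With Σ_k^{-2} = α/(Δ+E_k), Σ_mf^{-2} = (1/K)Σ_k Σ_k^{-2}, and ψ(E;Δ) = (α/2)(ln(1+E/Δ) − E/(Δ+E)), one has (1/K)Σ_{k=1}^K ψ(E_k;Δ) ≥ ψ(α/Σ_mf^{-2} − Δ; Δ). -/

import Mathlib

/-- The RS potential function `ψ(E;Δ) = (α/2)(ln(1+E/Δ) − E/(Δ+E))` of random linear
estimation. -/
noncomputable def psiRLE (α Δ E : ℝ) : ℝ :=
  (α / 2) * (Real.log (1 + E / Δ) - E / (Δ + E))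

lemma psiRLE_eq (α Δ : ℝ) (hα : 0 < α) (hΔ : 0 < Δ) (t : ℝ) (ht : 0 < t) :
    psiRLE α Δ (α / t - Δ)
      = (α / 2) * (Real.log α - Real.log t - Real.log Δ - 1) + (Δ / 2) * t := by
  have ht' := ht.ne'
  have hα' := hα.ne'
  have hΔ' := hΔ.ne'
  unfold psiRLE
  have h1 : 1 + (α / t - Δ) / Δ = α / (t * Δ) := by field_simp; ring
  have h2 : Δ + (α / t - Δ) = α / t := by ring
  have h3 : (α / t - Δ) / (α / t) = 1 - Δ * t / α := by
    field_simp
  rw [h1, h2, h3, Real.log_div hα' (by positivity),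
    Real.log_mul ht' hΔ']
  field_simp
  ring

/-- Jensen's inequality for the RLE potential: with `Σₖ⁻² = α/(Δ+Eₖ)`,
`Σ_mf⁻² = (1/K)∑ₖ Σₖ⁻²`, one has `(1/K)∑ₖ ψ(Eₖ;Δ) ≥ ψ(α/Σ_mf⁻² − Δ; Δ)`. -/
theorem psi_jensen (α Δ : ℝ) (hα : 0 < α) (hΔ : 0 < Δ) (K : ℕ) (hK : 0 < K)
    (E : Fin K → ℝ) (hE : ∀ k, 0 ≤ E k) :
    psiRLE α Δ (α / ((1 / (K : ℝ)) * ∑ k, α / (Δ + E k)) - Δ)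
      ≤ (1 / (K : ℝ)) * ∑ k, psiRLE α Δ (E k) := by
  haveI : Nonempty (Fin K) := Fin.pos_iff_nonempty.mp hK
  have hKpos : (0:ℝ) < K := Nat.cast_pos.mpr hK
  set x : Fin K → ℝ := fun k => α / (Δ + E k) with hx
  have hDE : ∀ k, 0 < Δ + E k := fun k => by have := hE k; linarith
  have hxpos : ∀ k, 0 < x k := fun k => div_pos hα (hDE k)
  set m : ℝ := (1/(K:ℝ)) * ∑ k, x k with hm
  have hmpos : 0 < m :=
    mul_pos (by positivity) (Finset.sum_pos (fun k _ => hxpos k) Finset.univ_nonempty)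
  have hjensen : (1/(K:ℝ)) * ∑ k, Real.log (x k) ≤ Real.log m := by
    have hlog := strictConcaveOn_log_Ioi.concaveOn
    have h := hlog.le_map_sum
      (t := Finset.univ) (w := fun _ : Fin K => 1/(K:ℝ)) (p := x)
      (fun i _ => by positivity)
      (by simp [Finset.sum_const, Finset.card_univ]; field_simp)
      (fun i _ => Set.mem_Ioi.mpr (hxpos i))
    simpa [smul_eq_mul, hm, Finset.mul_sum] using h
  have hEk : ∀ k, E k = α / x k - Δ := by
    intro k
    have : α / x k = Δ + E k := by
      rw [hx]
      field_simp
    rw [this]; ring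
  have hsum : ∑ k, psiRLE α Δ (E k)
      = ∑ k, ((α/2) * (Real.log α - Real.log Δ - 1)
          + (-(α/2)) * Real.log (x k) + (Δ/2) * x k) := by
    refine Finset.sum_congr rfl fun k _ => ?_
    rw [hEk k, psiRLE_eq α Δ hα hΔ _ (hxpos k)]
    ring
  rw [psiRLE_eq α Δ hα hΔ m hmpos, hsum]
  rw [Finset.sum_add_distrib, Finset.sum_add_distrib, Finset.sum_const,
    Finset.card_univ, Fintype.card_fin, ← Finset.mul_sum, ← Finset.mul_sum]
  have hrhs : (1/(K:ℝ)) * (K • ((α/2) * (Real.log α - Real.log Δ - 1))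
      + (-(α/2)) * ∑ i, Real.log (x i) + (Δ/2) * ∑ i, x i)
      = (α/2) * (Real.log α - Real.log Δ - 1)
        + (-(α/2)) * ((1/(K:ℝ)) * ∑ i, Real.log (x i)) + (Δ/2) * m := by
    rw [nsmul_eq_mul, hm]
    have hK' : (K:ℝ) ≠ 0 := hKpos.ne'
    field_simp
  rw [hrhs]
  have hmul := mul_le_mul_of_nonneg_left hjensen (by positivity : (0:ℝ) ≤ α/2)
  nlinarith [hmul]
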